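/- Let R : (0,∞) → ℝ be continuous, locally integrable, with R(t) ≤ 0 for all t > 0, and suppose that ∫_{T−t}^{T} R(s) ds = (∫₀ᵗ R(s) ds)(1 − ∫₀^{T−t} R(s) ds) for all 0 < t < T. Then the limit c := lim_{t→0⁺} R(t) exists in ℝ, c ≤ 0, and R(t) = c e^{−c t} for all t > 0. -/

import Mathlib

open MeasureTheory Set Filter intervalIntegral

/-- Functional-equation lemma from the theorem on the driftless geometric
Volterra process: a continuous, locally integrable, nonpositive `R` satisfying
the quadratic integral identity equals `c e^{-ct}` with `c = lim_{t→0⁺} R(t) ≤ 0`. -/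
theorem stmt_6 (R : ℝ → ℝ)
    (hRc : ContinuousOn R (Set.Ioi 0))
    (hRint : ∀ T > 0, MeasureTheory.IntegrableOn R (Set.Ioc 0 T))
    (hRnp : ∀ t > 0, R t ≤ 0)
    (hfun : ∀ t T : ℝ, 0 < t → t < T →
      (∫ s in (T - t)..T, R s)
        = (∫ s in (0:ℝ)..t, R s) * (1 - ∫ s in (0:ℝ)..(T - t), R s)) :
    ∃ c : ℝ, Filter.Tendsto R (nhdsWithin 0 (Set.Ioi 0)) (nhds c) ∧ c ≤ 0 ∧
      ∀ t > 0, R t = c * Real.exp (-c * t) := by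
  set F : ℝ → ℝ := fun t => ∫ s in (0:ℝ)..t, R s with hFdef
  have hFt : ∀ t : ℝ, (∫ s in (0:ℝ)..t, R s) = F t := fun _ => rfl
  -- interval integrability
  have hII : ∀ a b : ℝ, 0 ≤ a → a ≤ b → IntervalIntegrable R volume a b := by
    intro a b ha hab
    rcases eq_or_lt_of_le hab with rfl | h
    · exact IntervalIntegrable.refl
    · have hb : 0 < b := lt_of_le_of_lt ha h
      rw [intervalIntegrable_iff_integrableOn_Ioc_of_le hab]
      exact (hRint b hb).mono_set (Ioc_subset_Ioc ha le_rfl)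
  -- FTC
  have hderiv : ∀ a : ℝ, 0 < a → HasDerivAt F (R a) a := by
    intro a ha
    exact intervalIntegral.integral_hasDerivAt_right (hII 0 a le_rfl ha.le)
      (hRc.stronglyMeasurableAtFilter isOpen_Ioi a ha)
      (hRc.continuousAt (isOpen_Ioi.mem_nhds ha))
  -- F nonpositive
  have hFnp : ∀ t : ℝ, 0 ≤ t → F t ≤ 0 := by
    intro t ht
    rcases eq_or_lt_of_le ht with rfl | ht
    · simp [hFdef]
    · have : F t = ∫ s in Ioc (0:ℝ) t, R s := intervalIntegral.integral_of_le ht.le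
      rw [this]
      exact setIntegral_nonpos measurableSet_Ioc fun x hx => hRnp x hx.1
  have hGpos : ∀ t : ℝ, 0 ≤ t → 0 < 1 - F t := by
    intro t ht; have := hFnp t ht; linarith
  -- multiplicative relation
  have hmul : ∀ t : ℝ, 0 < t → ∀ s : ℝ, 0 < s → F (t + s) = F t + (1 - F t) * F s := by
    intro t ht s hs
    have h := hfun t (t + s) ht (by linarith)
    have hst : t + s - t = s := by ring
    rw [hst] at h
    have hadd := intervalIntegral.integral_add_adjacent_intervals
      (hII 0 s le_rfl hs.le) (hII s (t + s) hs.le (by linarith))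
    rw [h] at hadd
    simp only [hFt] at hadd
    rw [← hadd]; ring
  -- derivative relation: R (t + s) = (1 - F t) * R s
  have hR : ∀ t : ℝ, 0 < t → ∀ s : ℝ, 0 < s → R (t + s) = (1 - F t) * R s := by
    intro t ht s hs
    have hf1 : HasDerivAt F (R (t + s)) (t + s) := hderiv _ (by linarith)
    have hFs : HasDerivAt (fun T => F (T - t)) (R s) (t + s) := by
      have h1 : HasDerivAt (fun T : ℝ => T - t) 1 (t + s) := (hasDerivAt_id _).sub_const t
      have h2 : HasDerivAt F (R s) (t + s - t) := by
        rw [show t + s - t = s by ring]; exact hderiv s hs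
      have h3 := h2.comp (t + s) h1; rw [mul_one] at h3; exact h3
    have hf2 : HasDerivAt (fun T => F t + (1 - F t) * F (T - t)) ((1 - F t) * R s) (t + s) :=
      (hFs.const_mul (1 - F t)).const_add (F t)
    have hev : F =ᶠ[nhds (t + s)] fun T => F t + (1 - F t) * F (T - t) := by
      filter_upwards [isOpen_Ioi.mem_nhds (show t + s ∈ Ioi t by simp [hs])] with T hT
      have := hmul t ht (T - t) (by simpa using hT)
      rw [show t + (T - t) = T by ring] at this
      rw [this]
    have hf2' : HasDerivAt F ((1 - F t) * R s) (t + s) := hf2.congr_of_eventuallyEq hev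
    exact hf1.unique hf2'
  -- the limit c
  set c : ℝ := R 1 / (1 - F 1) with hcdef
  have hG1 : 0 < 1 - F 1 := hGpos 1 zero_le_one
  have hclim : Tendsto R (nhdsWithin 0 (Set.Ioi 0)) (nhds c) := by
    have h1 : Tendsto (fun s : ℝ => R (1 + s) / (1 - F 1)) (nhdsWithin 0 (Set.Ioi 0))
        (nhds (R 1 / (1 - F 1))) := by
      have ht1 : Tendsto (fun s : ℝ => 1 + s) (nhdsWithin 0 (Set.Ioi 0)) (nhds 1) := by
        have : Tendsto (fun s : ℝ => 1 + s) (nhds 0) (nhds 1) := by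
          simpa using (continuous_add_left (1:ℝ)).tendsto (0 : ℝ)
        exact this.mono_left nhdsWithin_le_nhds
      have hRc1 : ContinuousAt R 1 := hRc.continuousAt (isOpen_Ioi.mem_nhds (Set.mem_Ioi.mpr one_pos))
      exact (hRc1.tendsto.comp ht1).div_const _
    refine Tendsto.congr' ?_ h1
    filter_upwards [self_mem_nhdsWithin] with s hs
    rw [hR 1 one_pos s hs]
    exact mul_div_cancel_left₀ _ hG1.ne'
  have hcnp : c ≤ 0 := div_nonpos_of_nonpos_of_nonneg (hRnp 1 one_pos) hG1.le
  -- R t = c * (1 - F t)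
  have hRG : ∀ t : ℝ, 0 < t → R t = c * (1 - F t) := by
    intro t ht
    have h1 : Tendsto (fun s : ℝ => R (t + s)) (nhdsWithin 0 (Set.Ioi 0)) (nhds (R t)) := by
      have htt : Tendsto (fun s : ℝ => t + s) (nhdsWithin 0 (Set.Ioi 0)) (nhds t) := by
        have : Tendsto (fun s : ℝ => t + s) (nhds 0) (nhds t) := by
          simpa using (continuous_add_left t).tendsto (0 : ℝ)
        exact this.mono_left nhdsWithin_le_nhds
      exact (hRc.continuousAt (isOpen_Ioi.mem_nhds ht)).tendsto.comp htt
    have h2 : Tendsto (fun s : ℝ => (1 - F t) * R s) (nhdsWithin 0 (Set.Ioi 0))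
        (nhds ((1 - F t) * c)) := hclim.const_mul _
    have h12 : Tendsto (fun s : ℝ => R (t + s)) (nhdsWithin 0 (Set.Ioi 0))
        (nhds ((1 - F t) * c)) := by
      refine h2.congr' ?_
      filter_upwards [self_mem_nhdsWithin] with s hs
      exact (hR t ht s hs).symm
    have := tendsto_nhds_unique h1 h12
    rw [this]; ring
  -- F tends to 0 at 0⁺
  have hF0 : Tendsto F (nhdsWithin 0 (Set.Ioi 0)) (nhds 0) := by
    have hco : ContinuousOn F (Set.uIcc (0:ℝ) 1) :=
      intervalIntegral.continuousOn_primitive_interval' (hII 0 1 le_rfl zero_le_one)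
        (by simp)
    have h0 : ContinuousWithinAt F (Set.uIcc (0:ℝ) 1) 0 := hco 0 (by simp)
    have : Tendsto F (nhdsWithin 0 (Set.uIcc (0:ℝ) 1)) (nhds 0) := by
      have hF00 : F 0 = 0 := by simp [hFdef]
      simpa [ContinuousWithinAt, hF00] using h0
    refine this.mono_left ?_
    rw [show Set.uIcc (0:ℝ) 1 = Set.Icc 0 1 by simp [Set.uIcc_of_le zero_le_one]]
    rw [← nhdsWithin_Ioc_eq_nhdsGT (zero_lt_one (α := ℝ))]
    exact nhdsWithin_mono _ Ioc_subset_Icc_self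
  -- g := (1 - F t) * exp (c t) is constant = 1 on (0, ∞)
  set g : ℝ → ℝ := fun t => (1 - F t) * Real.exp (c * t) with hgdef
  have hgderiv : ∀ t : ℝ, 0 < t → HasDerivAt g 0 t := by
    intro t ht
    have h1 : HasDerivAt (fun T => 1 - F T) (-(R t)) t := (hderiv t ht).const_sub 1
    have h2 : HasDerivAt (fun T => Real.exp (c * T)) (Real.exp (c * t) * c) t := by
      have := ((hasDerivAt_id t).const_mul c).exp
      simpa using this
    have := h1.mul h2
    convert this using 1
    · rfl
    · rfl
    · rfl
    rw [hRG t ht]; ring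
  have hgconst : ∀ x : ℝ, 0 < x → ∀ y : ℝ, x ≤ y → g y = g x := by
    intro x hx y hxy
    have hcont : ContinuousOn g (Set.Icc x y) := fun z hz =>
      ((hgderiv z (lt_of_lt_of_le hx hz.1)).continuousAt).continuousWithinAt
    have hd : ∀ z ∈ Set.Ico x y, HasDerivWithinAt g 0 (Set.Ici z) z := fun z hz =>
      ((hgderiv z (lt_of_lt_of_le hx hz.1)).hasDerivWithinAt)
    exact constant_of_has_deriv_right_zero hcont hd y (by constructor <;> linarith)
  have hg1 : ∀ t : ℝ, 0 < t → g t = 1 := by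
    intro t ht
    have hglim : Tendsto g (nhdsWithin 0 (Set.Ioi 0)) (nhds 1) := by
      have h1 : Tendsto (fun s : ℝ => 1 - F s) (nhdsWithin 0 (Set.Ioi 0)) (nhds 1) := by
        simpa using (tendsto_const_nhds.sub hF0)
      have h2 : Tendsto (fun s : ℝ => Real.exp (c * s)) (nhdsWithin 0 (Set.Ioi 0)) (nhds 1) := by
        have hce : Continuous fun s : ℝ => Real.exp (c * s) :=
          Real.continuous_exp.comp (continuous_const.mul continuous_id)
        have : Tendsto (fun s : ℝ => Real.exp (c * s)) (nhds 0) (nhds 1) := by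
          simpa using hce.tendsto 0
        exact this.mono_left nhdsWithin_le_nhds
      simpa using h1.mul h2
    have hglim2 : Tendsto g (nhdsWithin 0 (Set.Ioi 0)) (nhds (g t)) := by
      refine tendsto_const_nhds.congr' ?_
      filter_upwards [Ioo_mem_nhdsGT_of_mem (by constructor <;> [exact le_rfl; exact ht] : (0:ℝ) ∈ Set.Ico 0 t)] with s hs
      exact hgconst s hs.1 t hs.2.le
    exact (tendsto_nhds_unique hglim2 hglim)
  refine ⟨c, hclim, hcnp, fun t ht => ?_⟩
  have hgt := hg1 t ht
  have hexp : (1 - F t) = Real.exp (-c * t) := by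
    have hepos : 0 < Real.exp (c * t) := Real.exp_pos _
    have : (1 - F t) = (Real.exp (c * t))⁻¹ := eq_inv_of_mul_eq_one_left hgt
    rw [this, ← Real.exp_neg]; ring_nf
  rw [hRG t ht, hexp]
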